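/- arXiv:2005.09248 — 4 statements merged into one kernel-verified Lean document; each statement's English description precedes it below -/
import Mathlib

section
/- Let n ≥ 4α with α a positive integer, δ ∈ (1/2, 1), and let Φ be an (ΣεᵢqᵢPDP) count-query mechanism on binary datasets d ∈ {0,1}^n that is (α,δ)-PAC, i.e., for every dataset d, Pr(|Φ(d) − ∑_i d_i| < α) ≥ δ, and such that Φ satisfies (ε_i q_i)-personalised differential privacy in each coordinate i. Then ∑_{i=1}^n ε_i q_i ≥ (n/(4α)) · (ln δ − ln(1−δ)). -/
open MeasureTheory Real

lemma gp_aux {n : ℕ} (ε q : Fin n → ℝ)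
    (μ : (Fin n → ℝ) → Measure ℝ)
    (hPDP : ∀ (i : Fin n) (d d' : Fin n → ℝ),
      (∀ j, d j = 0 ∨ d j = 1) → (∀ j, d' j = 0 ∨ d' j = 1) →
      d i ≠ d' i → (∀ j, j ≠ i → d j = d' j) →
      ∀ R : Set ℝ, MeasurableSet R →
        μ d R ≤ ENNReal.ofReal (Real.exp (ε i * q i)) * μ d' R)
    (S : Finset (Fin n)) :
    ∀ R : Set ℝ, MeasurableSet R →
    μ (fun _ => 0) R ≤ ENNReal.ofReal (Real.exp (∑ i ∈ S, ε i * q i)) *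
      μ (fun i => if i ∈ S then (1:ℝ) else 0) R := by
  induction S using Finset.induction_on with
  | empty =>
      intro R hR
      simp
  | @insert a S ha IH =>
      intro R hR
      have hbinS : ∀ j, (fun i => if i ∈ S then (1:ℝ) else 0) j = 0 ∨
          (fun i => if i ∈ S then (1:ℝ) else 0) j = 1 := by
        intro j; by_cases h : j ∈ S <;> simp [h]
      have hbinS' : ∀ j, (fun i => if i ∈ insert a S then (1:ℝ) else 0) j = 0 ∨
          (fun i => if i ∈ insert a S then (1:ℝ) else 0) j = 1 := by
        intro j; by_cases h : j ∈ insert a S <;> simp [h]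
      have hne : (fun i => if i ∈ S then (1:ℝ) else 0) a ≠
          (fun i => if i ∈ insert a S then (1:ℝ) else 0) a := by
        simp [ha]
      have heq : ∀ j, j ≠ a → (fun i => if i ∈ S then (1:ℝ) else 0) j =
          (fun i => if i ∈ insert a S then (1:ℝ) else 0) j := by
        intro j hj
        simp [Finset.mem_insert, hj]
      have step := hPDP a _ _ hbinS hbinS' hne heq R hR
      calc μ (fun _ => 0) R
          ≤ ENNReal.ofReal (Real.exp (∑ i ∈ S, ε i * q i)) *
            μ (fun i => if i ∈ S then (1:ℝ) else 0) R := IH R hR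
        _ ≤ ENNReal.ofReal (Real.exp (∑ i ∈ S, ε i * q i)) *
            (ENNReal.ofReal (Real.exp (ε a * q a)) *
              μ (fun i => if i ∈ insert a S then (1:ℝ) else 0) R) :=
              mul_le_mul_right step _
        _ = ENNReal.ofReal (Real.exp (∑ i ∈ insert a S, ε i * q i)) *
            μ (fun i => if i ∈ insert a S then (1:ℝ) else 0) R := by
              rw [Finset.sum_insert ha, Real.exp_add,
                ENNReal.ofReal_mul (Real.exp_nonneg _)]
              ring


lemma key_aux {n α : ℕ} (hα : 1 ≤ α)
    (δ : ℝ) (hδhalf : 1/2 < δ) (hδone : δ < 1)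
    (ε q : Fin n → ℝ)
    (μ : (Fin n → ℝ) → Measure ℝ) (hprob : ∀ d, IsProbabilityMeasure (μ d))
    (hGP : ∀ (S : Finset (Fin n)), ∀ R : Set ℝ, MeasurableSet R →
      μ (fun _ => 0) R ≤ ENNReal.ofReal (Real.exp (∑ i ∈ S, ε i * q i)) *
        μ (fun i => if i ∈ S then (1:ℝ) else 0) R)
    (hPAC : ∀ d : Fin n → ℝ, (∀ j, d j = 0 ∨ d j = 1) →
      ENNReal.ofReal δ ≤ μ d {r : ℝ | |r - ∑ i, d i| < (α : ℝ)})
    (T : Finset (Fin n)) (hT : T.card = 2 * α) :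
    Real.log δ - Real.log (1 - δ) ≤ ∑ i ∈ T, ε i * q i := by
  have hδ0 : (0:ℝ) < δ := by linarith
  have h1δ0 : (0:ℝ) < 1 - δ := by linarith
  have hα0 : (0:ℝ) < (α:ℝ) := by exact_mod_cast hα
  set dT : Fin n → ℝ := fun i => if i ∈ T then (1:ℝ) else 0 with hdT
  have hbinT : ∀ j, dT j = 0 ∨ dT j = 1 := by
    intro j; by_cases h : j ∈ T <;> simp [hdT, h]
  have hsum0 : ∑ i, (fun _ : Fin n => (0:ℝ)) i = 0 := by simp
  have hsumT : ∑ i, dT i = 2 * (α:ℝ) := by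
    simp only [hdT, Finset.sum_ite_mem, Finset.univ_inter, Finset.sum_const,
      nsmul_eq_mul, mul_one, hT]
    push_cast; ring
  set A : Set ℝ := {r : ℝ | |r - ∑ i, (fun _ : Fin n => (0:ℝ)) i| < (α:ℝ)} with hA
  set A' : Set ℝ := {r : ℝ | |r - ∑ i, dT i| < (α:ℝ)} with hA'
  have hAball : A = Metric.ball (∑ i, (fun _ : Fin n => (0:ℝ)) i) (α:ℝ) := by
    ext r; simp [hA, Metric.mem_ball, Real.dist_eq]
  have hA'ball : A' = Metric.ball (∑ i, dT i) (α:ℝ) := by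
    ext r; simp [hA', Metric.mem_ball, Real.dist_eq]
  have hAm : MeasurableSet A := by rw [hAball]; exact measurableSet_ball
  have hA'm : MeasurableSet A' := by rw [hA'ball]; exact measurableSet_ball
  have hdisj : Disjoint A A' := by
    rw [Set.disjoint_left]
    intro r hr hr'
    rw [hA, Set.mem_setOf_eq, hsum0] at hr
    rw [hA', Set.mem_setOf_eq, hsumT] at hr'
    rw [abs_lt] at hr hr'
    obtain ⟨h1, h2⟩ := hr
    obtain ⟨h3, h4⟩ := hr'
    linarith
  -- accuracy
  have haccz : ENNReal.ofReal δ ≤ μ (fun _ => 0) A :=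
    hPAC (fun _ => 0) (fun j => Or.inl rfl)
  have haccT : ENNReal.ofReal δ ≤ μ dT A' := hPAC dT hbinT
  -- μ dT A ≤ 1 - δ
  have hunion : μ dT A + μ dT A' ≤ 1 := by
    rw [← measure_union hdisj hA'm]
    calc μ dT (A ∪ A') ≤ μ dT Set.univ := measure_mono (Set.subset_univ _)
      _ = 1 := (hprob dT).measure_univ
  have hμA : μ dT A ≤ ENNReal.ofReal (1 - δ) := by
    have h2 : μ dT A + ENNReal.ofReal δ ≤ ENNReal.ofReal (1 - δ) + ENNReal.ofReal δ := by
      rw [← ENNReal.ofReal_add (by linarith) (le_of_lt hδ0)]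
      have : (1 - δ) + δ = 1 := by ring
      rw [this, ENNReal.ofReal_one]
      calc μ dT A + ENNReal.ofReal δ ≤ μ dT A + μ dT A' := add_le_add_right haccT _
        _ ≤ 1 := hunion
    exact (ENNReal.add_le_add_iff_right ENNReal.ofReal_ne_top).mp h2
  -- chain
  have hchain : ENNReal.ofReal δ ≤
      ENNReal.ofReal (Real.exp (∑ i ∈ T, ε i * q i) * (1 - δ)) := by
    calc ENNReal.ofReal δ ≤ μ (fun _ => 0) A := haccz
      _ ≤ ENNReal.ofReal (Real.exp (∑ i ∈ T, ε i * q i)) * μ dT A := hGP T A hAm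
      _ ≤ ENNReal.ofReal (Real.exp (∑ i ∈ T, ε i * q i)) * ENNReal.ofReal (1 - δ) :=
          mul_le_mul_right hμA _
      _ = ENNReal.ofReal (Real.exp (∑ i ∈ T, ε i * q i) * (1 - δ)) := by
          rw [ENNReal.ofReal_mul (Real.exp_nonneg _)]
  have hreal : δ ≤ Real.exp (∑ i ∈ T, ε i * q i) * (1 - δ) := by
    have hnn : 0 ≤ Real.exp (∑ i ∈ T, ε i * q i) * (1 - δ) := by positivity
    exact (ENNReal.ofReal_le_ofReal_iff hnn).mp hchain
  have hlog := Real.log_le_log hδ0 hreal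
  rw [Real.log_mul (Real.exp_ne_zero _) (ne_of_gt h1δ0), Real.log_exp] at hlog
  linarith


open scoped Classical in
theorem count_query_accuracy_lower_bound {n α : ℕ} (hα : 1 ≤ α) (hn : 4 * α ≤ n)
    (δ : ℝ) (hδhalf : 1/2 < δ) (hδone : δ < 1)
    (ε q : Fin n → ℝ) (hε : ∀ i, 0 ≤ ε i) (hq : ∀ i, q i = 0 ∨ q i = 1)
    (μ : (Fin n → ℝ) → Measure ℝ) (hprob : ∀ d, IsProbabilityMeasure (μ d))
    (hPDP : ∀ (i : Fin n) (d d' : Fin n → ℝ),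
      (∀ j, d j = 0 ∨ d j = 1) → (∀ j, d' j = 0 ∨ d' j = 1) →
      d i ≠ d' i → (∀ j, j ≠ i → d j = d' j) →
      ∀ R : Set ℝ, MeasurableSet R →
        μ d R ≤ ENNReal.ofReal (Real.exp (ε i * q i)) * μ d' R)
    (hPAC : ∀ d : Fin n → ℝ, (∀ j, d j = 0 ∨ d j = 1) →
      ENNReal.ofReal δ ≤ μ d {r : ℝ | |r - ∑ i, d i| < (α : ℝ)}) :
    (n : ℝ) / (4 * α) * (Real.log δ - Real.log (1 - δ)) ≤ ∑ i, ε i * q i := by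
  have hKEY : ∀ T : Finset (Fin n), T.card = 2 * α →
      Real.log δ - Real.log (1 - δ) ≤ ∑ i ∈ T, ε i * q i :=
    key_aux hα δ hδhalf hδone ε q μ hprob (gp_aux ε q μ hPDP) hPAC
  have hcnn : ∀ i, 0 ≤ ε i * q i := by
    intro i
    rcases hq i with h | h <;> simp [h, hε i]
  set L := Real.log δ - Real.log (1 - δ) with hL
  have hL0 : 0 ≤ L := by
    have h1 : (0:ℝ) < 1 - δ := by linarith
    have h2 : 1 - δ ≤ δ := by linarith
    have := Real.log_le_log h1 h2
    simp only [hL]; linarith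
  set m := 2 * α with hm
  have hm0 : 0 < m := by omega
  set k := n / m with hk
  have hk1 : 1 ≤ k := by
    rw [hk]; exact (Nat.one_le_div_iff hm0).mpr (by omega)
  have hmk : m * k ≤ n := by rw [hk]; exact Nat.mul_div_le n m
  have hn4 : n ≤ 4 * α * k := by
    have h1 := Nat.div_add_mod n m
    have h2 := Nat.mod_lt n hm0
    rw [← hk] at h1
    have h3 : n < m * (k + 1) := by
      rw [Nat.mul_add, mul_one]; omega
    calc n ≤ m * (k + 1) := le_of_lt h3
      _ ≤ m * (k + k) := Nat.mul_le_mul_left m (by omega)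
      _ = 4 * α * k := by rw [hm]; ring
  -- the embedding of blocks
  have hbound : ∀ p : Fin k × Fin m, m * p.1.val + p.2.val < n := by
    intro p
    calc m * p.1.val + p.2.val < m * p.1.val + m := Nat.add_lt_add_left p.2.isLt _
      _ = m * (p.1.val + 1) := by ring
      _ ≤ m * k := Nat.mul_le_mul_left m p.1.isLt
      _ ≤ n := hmk
  set F : Fin k × Fin m → Fin n := fun p => ⟨m * p.1.val + p.2.val, hbound p⟩ with hF
  have hFinj : Function.Injective F := by
    intro p p' h
    have hv : m * p.1.val + p.2.val = m * p'.1.val + p'.2.val := congrArg Fin.val h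
    have hd : p.1.val = p'.1.val := by
      have := congrArg (· / m) hv
      simpa [Nat.mul_add_div hm0, Nat.div_eq_of_lt p.2.isLt,
        Nat.div_eq_of_lt p'.2.isLt] using this
    have hmod : p.2.val = p'.2.val := by
      have := congrArg (· % m) hv
      simpa [Nat.mul_add_mod, Nat.mod_eq_of_lt p.2.isLt,
        Nat.mod_eq_of_lt p'.2.isLt] using this
    exact Prod.ext (Fin.ext hd) (Fin.ext hmod)
  have hblock : ∀ j : Fin k, L ≤ ∑ s : Fin m, ε (F (j, s)) * q (F (j, s)) := by
    intro j
    have hinj : Function.Injective (fun s : Fin m => F (j, s)) := by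
      intro s s' h
      have := hFinj h
      exact (Prod.mk.injEq _ _ _ _).mp this |>.2
    have hcard : (Finset.image (fun s : Fin m => F (j, s)) Finset.univ).card = 2 * α := by
      rw [Finset.card_image_of_injective _ hinj, Finset.card_univ, Fintype.card_fin]
    have h := hKEY _ hcard
    rwa [Finset.sum_image (fun a _ b _ hab => hinj hab)] at h
  have htotal : (k : ℝ) * L ≤ ∑ i, ε i * q i := by
    have h1 : (k : ℝ) * L ≤ ∑ j : Fin k, ∑ s : Fin m, ε (F (j, s)) * q (F (j, s)) := by
      calc (k : ℝ) * L = ∑ _j : Fin k, L := by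
            rw [Finset.sum_const, Finset.card_univ, Fintype.card_fin, nsmul_eq_mul]
        _ ≤ _ := Finset.sum_le_sum (fun j _ => hblock j)
    have h2 : ∑ j : Fin k, ∑ s : Fin m, ε (F (j, s)) * q (F (j, s))
        = ∑ p : Fin k × Fin m, ε (F p) * q (F p) := by
      exact (Fintype.sum_prod_type (fun p : Fin k × Fin m => ε (F p) * q (F p))).symm
    have h3 : ∑ p : Fin k × Fin m, ε (F p) * q (F p)
        = ∑ i ∈ Finset.image F Finset.univ, ε i * q i :=
      (Finset.sum_image (f := fun i => ε i * q i) (g := F)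
        (fun a _ b _ hab => hFinj hab)).symm
    have h4 : ∑ i ∈ Finset.image F Finset.univ, ε i * q i ≤ ∑ i, ε i * q i :=
      Finset.sum_le_sum_of_subset_of_nonneg (Finset.subset_univ _)
        (fun i _ _ => hcnn i)
    linarith
  have hnk : (n : ℝ) / (4 * α) ≤ (k : ℝ) := by
    have hα0 : (0:ℝ) < 4 * α := by positivity
    rw [div_le_iff₀ hα0]
    have : (n : ℝ) ≤ 4 * α * k := by exact_mod_cast hn4
    linarith
  calc (n : ℝ) / (4 * α) * L ≤ (k : ℝ) * L := mul_le_mul_of_nonneg_right hnk hL0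
    _ ≤ ∑ i, ε i * q i := htotal
end

section
/- In the count-query impossibility setup, suppose the 4α values ε_1 q_1, ..., ε_{4α} q_{4α} (sorted ascending among n values) satisfy ∑_{i=1}^{4α} ε_i q_i < ln δ − ln(1−δ), and among the first 4α coordinates at least 2α entries of the binary dataset d equal 0. Let d' be obtained from d by setting exactly 2α of these 0-entries to 1. Then the count satisfies ∑_i d'_i = ∑_i d_i + 2α, and any event R with Pr(Φ(d) ∈ R) ≥ δ satisfies Pr(Φ(d') ∈ R) > 1 − δ, where Φ is (ε_i q_i)-PDP in each coordinate. -/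
open MeasureTheory Real

open scoped Classical in
theorem count_query_flip_step {n α : ℕ} (hα : 1 ≤ α) (hn : 4 * α ≤ n)
    (δ : ℝ) (hδhalf : 1/2 < δ) (hδone : δ < 1)
    (ε q : Fin n → ℝ) (hε : ∀ i, 0 ≤ ε i) (hq : ∀ i, q i = 0 ∨ q i = 1)
    (μ : (Fin n → ℝ) → Measure ℝ) (hprob : ∀ d, IsProbabilityMeasure (μ d))
    (hPDP : ∀ (i : Fin n) (d d' : Fin n → ℝ),
      (∀ j, d j = 0 ∨ d j = 1) → (∀ j, d' j = 0 ∨ d' j = 1) →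
      d i ≠ d' i → (∀ j, j ≠ i → d j = d' j) →
      ∀ R : Set ℝ, MeasurableSet R →
        μ d R ≤ ENNReal.ofReal (Real.exp (ε i * q i)) * μ d' R)
    (d : Fin n → ℝ) (hd : ∀ j, d j = 0 ∨ d j = 1)
    (hsorted : ∀ i j : Fin n, i ≤ j → ε i * q i ≤ ε j * q j)
    (hsum : ∑ i ∈ Finset.univ.filter (fun i : Fin n => (i : ℕ) < 4 * α), ε i * q i
        < Real.log δ - Real.log (1 - δ))
    (I' : Finset (Fin n)) (hI'lt : ∀ i ∈ I', (i : ℕ) < 4 * α)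
    (hI'card : I'.card = 2 * α) (hI'zero : ∀ i ∈ I', d i = 0)
    (d' : Fin n → ℝ) (hd'def : ∀ i, d' i = if i ∈ I' then 1 else d i) :
    (∑ i, d' i = ∑ i, d i + 2 * α) ∧
    ∀ R : Set ℝ, MeasurableSet R → ENNReal.ofReal δ ≤ μ d R →
      ENNReal.ofReal (1 - δ) < μ d' R := by
  have hεq : ∀ i, 0 ≤ ε i * q i := by
    intro i; rcases hq i with h | h <;> simp [h, hε i]
  constructor
  · have h1 : ∀ i, d' i = d i + (if i ∈ I' then (1:ℝ) else 0) := by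
      intro i; rw [hd'def]; split
      · rw [hI'zero i ‹_›]; ring
      · ring
    calc ∑ i, d' i = ∑ i, (d i + (if i ∈ I' then (1:ℝ) else 0)) := by
          exact Finset.sum_congr rfl fun i _ => h1 i
      _ = ∑ i, d i + ∑ i, (if i ∈ I' then (1:ℝ) else 0) := Finset.sum_add_distrib
      _ = ∑ i, d i + 2 * α := by
          congr 1
          rw [Finset.sum_ite_mem, Finset.univ_inter, Finset.sum_const, hI'card]
          push_cast; ring
  · intro R hR hδR
    -- group privacy by induction over subsets of I'
    have key : ∀ S : Finset (Fin n), S ⊆ I' →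
        μ d R ≤ ENNReal.ofReal (Real.exp (∑ i ∈ S, ε i * q i)) *
          μ (fun i => if i ∈ S then 1 else d i) R := by
      intro S
      induction S using Finset.induction_on with
      | empty => intro _; simp
      | @insert a S ha ih =>
        intro hsub
        have hSsub : S ⊆ I' := fun x hx => hsub (Finset.mem_insert_of_mem hx)
        have haI : a ∈ I' := hsub (Finset.mem_insert_self a S)
        set dS : Fin n → ℝ := fun i => if i ∈ S then 1 else d i with hdS
        set dT : Fin n → ℝ := fun i => if i ∈ insert a S then 1 else d i with hdT
        have hbin : ∀ j, dS j = 0 ∨ dS j = 1 := by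
          intro j; by_cases h : j ∈ S <;> simp [hdS, h, hd j]
        have hbin' : ∀ j, dT j = 0 ∨ dT j = 1 := by
          intro j; by_cases h : j ∈ insert a S
          · right; simp only [hdT]; rw [if_pos h]
          · have : dT j = d j := by simp only [hdT]; rw [if_neg h]
            rw [this]; exact hd j
        have hne : dS a ≠ dT a := by
          simp only [hdS, hdT, if_neg ha, Finset.mem_insert_self, if_pos]
          rw [hI'zero a haI]; norm_num
        have heq : ∀ j, j ≠ a → dS j = dT j := by
          intro j hj
          simp [hdS, hdT, Finset.mem_insert, hj]
        have step := hPDP a dS dT hbin hbin' hne heq R hR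
        calc μ d R ≤ ENNReal.ofReal (Real.exp (∑ i ∈ S, ε i * q i)) * μ dS R :=
              ih hSsub
          _ ≤ ENNReal.ofReal (Real.exp (∑ i ∈ S, ε i * q i)) *
              (ENNReal.ofReal (Real.exp (ε a * q a)) * μ dT R) := by
              exact mul_le_mul_right step _
          _ = ENNReal.ofReal (Real.exp (∑ i ∈ insert a S, ε i * q i)) * μ dT R := by
              rw [Finset.sum_insert ha, Real.exp_add, ENNReal.ofReal_mul (Real.exp_nonneg _)]
              ring
    have hmain := key I' (le_refl I')
    have hd'eq : (fun i => if i ∈ I' then (1:ℝ) else d i) = d' := by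
      funext i; rw [hd'def]
    rw [hd'eq] at hmain
    -- bound the exponent
    set E := ∑ i ∈ I', ε i * q i with hE
    have hEle : E ≤ ∑ i ∈ Finset.univ.filter (fun i : Fin n => (i : ℕ) < 4 * α), ε i * q i := by
      apply Finset.sum_le_sum_of_subset_of_nonneg
      · intro i hi
        simp only [Finset.mem_filter, Finset.mem_univ, true_and]
        exact hI'lt i hi
      · intro i _ _; exact hεq i
    have hElt : E < Real.log δ - Real.log (1 - δ) := lt_of_le_of_lt hEle hsum
    have hδpos : 0 < δ := by linarith
    have h1δpos : 0 < 1 - δ := by linarith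
    have hexp : Real.exp E < δ / (1 - δ) := by
      have : Real.log δ - Real.log (1 - δ) = Real.log (δ / (1 - δ)) := by
        rw [Real.log_div (ne_of_gt hδpos) (ne_of_gt h1δpos)]
      rw [this] at hElt
      calc Real.exp E < Real.exp (Real.log (δ / (1 - δ))) := Real.exp_lt_exp.mpr hElt
        _ = δ / (1 - δ) := Real.exp_log (by positivity)
    by_contra hcon
    push_neg at hcon
    have hfinal : μ d R < ENNReal.ofReal δ := by
      calc μ d R ≤ ENNReal.ofReal (Real.exp E) * μ d' R := hmain
        _ ≤ ENNReal.ofReal (Real.exp E) * ENNReal.ofReal (1 - δ) :=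
            mul_le_mul_right hcon _
        _ = ENNReal.ofReal (Real.exp E * (1 - δ)) :=
            (ENNReal.ofReal_mul (Real.exp_nonneg _)).symm
        _ < ENNReal.ofReal δ := by
            apply ENNReal.ofReal_lt_ofReal_iff hδpos |>.mpr
            calc Real.exp E * (1 - δ) < (δ / (1 - δ)) * (1 - δ) := by
                  exact mul_lt_mul_of_pos_right hexp h1δpos
              _ = δ := by field_simp
    exact absurd (lt_of_le_of_lt hδR hfinal) (lt_irrefl _)
end

section
/- Let Φ_φ be the PE exponential-type mechanism with output distribution Pr(Φ_φ(d) = r) = exp((1/2)σ_φ(d,r)) / ∑_{r'} exp((1/2)σ_φ(d,r')) over a finite range, where σ_φ(d,r) = max_{d' : φ(d') = r} (−∑_{i ∈ I_{d⊕d'}} ε_i) and I_{d⊕d'} = {i : d_i ≠ d'_i}. Then for every i and any pair of i-neighbouring datasets d, d̃, and any output r, Pr(Φ_φ(d) = r) ≤ e^{ε_i} · Pr(Φ_φ(d̃) = r), i.e., Φ_φ is ε-personalised differentially private. -/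
private lemma sigma_close {n : ℕ} {D R : Type*} [DecidableEq D]
    (φ : (Fin n → D) → R)
    (ε : Fin n → ℝ) (hε : ∀ i, 0 ≤ ε i)
    (σ : (Fin n → D) → R → ℝ)
    (hσ : ∀ d r, IsGreatest
      {v : ℝ | ∃ d', φ d' = r ∧
        v = -∑ i ∈ Finset.univ.filter (fun i => d i ≠ d' i), ε i} (σ d r))
    (i : Fin n) (d dt : Fin n → D) (heq : ∀ j, j ≠ i → d j = dt j)
    (r : R) : σ d r ≤ σ dt r + ε i := by
  obtain ⟨d', hφ, hval⟩ := (hσ d r).1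
  have hsub : (Finset.univ.filter (fun j => dt j ≠ d' j)) ⊆
      insert i (Finset.univ.filter (fun j => d j ≠ d' j)) := by
    intro j hj
    simp only [Finset.mem_filter, Finset.mem_univ, true_and] at hj
    by_cases hji : j = i
    · simp [hji]
    · simp only [Finset.mem_insert, Finset.mem_filter, Finset.mem_univ, true_and]
      exact Or.inr (by rw [heq j hji]; exact hj)
  have hins : ∑ j ∈ insert i (Finset.univ.filter (fun j => d j ≠ d' j)), ε j ≤
      ε i + ∑ j ∈ Finset.univ.filter (fun j => d j ≠ d' j), ε j := by
    by_cases h : i ∈ Finset.univ.filter (fun j => d j ≠ d' j)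
    · rw [Finset.insert_eq_self.2 h]; linarith [hε i]
    · rw [Finset.sum_insert h]
  have hsum : ∑ j ∈ Finset.univ.filter (fun j => dt j ≠ d' j), ε j ≤
      ε i + ∑ j ∈ Finset.univ.filter (fun j => d j ≠ d' j), ε j :=
    le_trans (Finset.sum_le_sum_of_subset_of_nonneg hsub (fun j _ _ => hε j)) hins
  have hmem : (-∑ j ∈ Finset.univ.filter (fun j => dt j ≠ d' j), ε j) ∈
      {v : ℝ | ∃ d', φ d' = r ∧
        v = -∑ j ∈ Finset.univ.filter (fun j => dt j ≠ d' j), ε j} := ⟨d', hφ, rfl⟩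
  have := (hσ dt r).2 hmem
  rw [hval]
  linarith

theorem pe_mechanism_is_pdp {n : ℕ} {D R : Type*} [Fintype D] [DecidableEq D]
    [Fintype R] [Nonempty R]
    (φ : (Fin n → D) → R) (hsurj : Function.Surjective φ)
    (ε : Fin n → ℝ) (hε : ∀ i, 0 ≤ ε i)
    (σ : (Fin n → D) → R → ℝ)
    (hσ : ∀ d r, IsGreatest
      {v : ℝ | ∃ d', φ d' = r ∧
        v = -∑ i ∈ Finset.univ.filter (fun i => d i ≠ d' i), ε i} (σ d r))
    (p : (Fin n → D) → R → ℝ)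
    (hp : ∀ d r, p d r = Real.exp (σ d r / 2) / ∑ r' : R, Real.exp (σ d r' / 2))
    (i : Fin n) (d dt : Fin n → D) (hne : d i ≠ dt i) (heq : ∀ j, j ≠ i → d j = dt j)
    (r : R) :
    p d r ≤ Real.exp (ε i) * p dt r := by
  have h1 : σ d r ≤ σ dt r + ε i := sigma_close φ ε hε σ hσ i d dt heq r
  have h2 : ∀ r', σ dt r' ≤ σ d r' + ε i := fun r' =>
    sigma_close φ ε hε σ hσ i dt d (fun j hj => (heq j hj).symm) r'
  have hZd : (0:ℝ) < ∑ r' : R, Real.exp (σ d r' / 2) :=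
    Finset.sum_pos (fun r' _ => Real.exp_pos _) Finset.univ_nonempty
  have hZdt : (0:ℝ) < ∑ r' : R, Real.exp (σ dt r' / 2) :=
    Finset.sum_pos (fun r' _ => Real.exp_pos _) Finset.univ_nonempty
  have hnum : Real.exp (σ d r / 2) ≤ Real.exp (ε i / 2) * Real.exp (σ dt r / 2) := by
    rw [← Real.exp_add]
    exact Real.exp_le_exp.2 (by linarith)
  have hden : (∑ r' : R, Real.exp (σ dt r' / 2)) ≤
      Real.exp (ε i / 2) * ∑ r' : R, Real.exp (σ d r' / 2) := by
    rw [Finset.mul_sum]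
    refine Finset.sum_le_sum (fun r' _ => ?_)
    rw [← Real.exp_add]
    exact Real.exp_le_exp.2 (by linarith [h2 r'])
  rw [hp, hp, ← mul_div_assoc, div_le_div_iff₀ hZd hZdt]
  calc Real.exp (σ d r / 2) * ∑ r' : R, Real.exp (σ dt r' / 2)
      ≤ (Real.exp (ε i / 2) * Real.exp (σ dt r / 2)) *
        (Real.exp (ε i / 2) * ∑ r' : R, Real.exp (σ d r' / 2)) :=
        mul_le_mul hnum hden hZdt.le (by positivity)
    _ = Real.exp (ε i) * Real.exp (σ dt r / 2) * ∑ r' : R, Real.exp (σ d r' / 2) := by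
        rw [mul_mul_mul_comm, ← Real.exp_add, add_halves, mul_assoc]
end

section
/- For i-neighbouring datasets d and d̃ (differing exactly in coordinate i), the score σ_φ(d,r) := max_{d' : φ(d') = r} (−∑_{j : d_j ≠ d'_j} ε_j) satisfies |σ_φ(d,r) − σ_φ(d̃,r)| ≤ ε_i for every r in the range of φ, provided the max is attained (e.g., the domain is finite) and {d' : φ(d') = r} is nonempty. -/
private lemma sum_filter_le {n : ℕ} {D : Type*} [DecidableEq D]
    (ε : Fin n → ℝ) (hε : ∀ j, 0 ≤ ε j) (i : Fin n) (d dt d' : Fin n → D)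
    (heq : ∀ j, j ≠ i → d j = dt j) :
    ∑ j ∈ Finset.univ.filter (fun j => d j ≠ d' j), ε j ≤
      (∑ j ∈ Finset.univ.filter (fun j => dt j ≠ d' j), ε j) + ε i := by
  have hsub : Finset.univ.filter (fun j => d j ≠ d' j) ⊆
      insert i (Finset.univ.filter (fun j => dt j ≠ d' j)) := by
    intro j hj
    simp only [Finset.mem_filter, Finset.mem_univ, true_and] at hj
    by_cases h : j = i
    · simp [h]
    · simp only [Finset.mem_insert, Finset.mem_filter, Finset.mem_univ, true_and]
      right; rw [← heq j h]; exact hj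
  calc ∑ j ∈ Finset.univ.filter (fun j => d j ≠ d' j), ε j
      ≤ ∑ j ∈ insert i (Finset.univ.filter (fun j => dt j ≠ d' j)), ε j :=
        Finset.sum_le_sum_of_subset_of_nonneg hsub (fun j _ _ => hε j)
    _ ≤ (∑ j ∈ Finset.univ.filter (fun j => dt j ≠ d' j), ε j) + ε i := by
        rcases Finset.decidableMem i (Finset.univ.filter (fun j => dt j ≠ d' j)) with h | h
        · rw [Finset.sum_insert h]; linarith [Finset.sum_nonneg (fun j (_ : j ∈ (Finset.univ.filter (fun j => dt j ≠ d' j))) => hε j)]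
        · rw [Finset.insert_eq_self.mpr h]; linarith [hε i]

private lemma one_side {n : ℕ} {D R : Type*} [DecidableEq D]
    (φ : (Fin n → D) → R) (ε : Fin n → ℝ) (hε : ∀ j, 0 ≤ ε j)
    (σ : (Fin n → D) → R → ℝ)
    (hσ : ∀ (d : Fin n → D) (r : R), (∃ d₀, φ d₀ = r) → IsGreatest
      {v : ℝ | ∃ d', φ d' = r ∧
        v = -∑ j ∈ Finset.univ.filter (fun j => d j ≠ d' j), ε j} (σ d r))
    (i : Fin n) (d dt : Fin n → D) (heq : ∀ j, j ≠ i → d j = dt j)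
    (r : R) (hr : ∃ d₀, φ d₀ = r) :
    σ d r - σ dt r ≤ ε i := by
  obtain ⟨⟨d', hφ, hval⟩, _⟩ := hσ d r hr
  have hub := (hσ dt r hr).2 ⟨d', hφ, rfl⟩
  have := sum_filter_le ε hε i dt d d' (fun j hj => (heq j hj).symm)
  rw [hval]; linarith

theorem pe_score_lipschitz {n : ℕ} {D R : Type*} [DecidableEq D]
    (φ : (Fin n → D) → R) (ε : Fin n → ℝ) (hε : ∀ j, 0 ≤ ε j)
    (σ : (Fin n → D) → R → ℝ)
    (hσ : ∀ (d : Fin n → D) (r : R), (∃ d₀, φ d₀ = r) → IsGreatest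
      {v : ℝ | ∃ d', φ d' = r ∧
        v = -∑ j ∈ Finset.univ.filter (fun j => d j ≠ d' j), ε j} (σ d r))
    (i : Fin n) (d dt : Fin n → D) (hne : d i ≠ dt i) (heq : ∀ j, j ≠ i → d j = dt j)
    (r : R) (hr : ∃ d₀, φ d₀ = r) :
    |σ d r - σ dt r| ≤ ε i := by
  rw [abs_sub_le_iff]
  exact ⟨one_side φ ε hε σ hσ i d dt heq r hr,
    one_side φ ε hε σ hσ i dt d (fun j hj => (heq j hj).symm) r hr⟩
end
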